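/- For every integer n ≥ 2, every d > 0, and every ε > 0 with ε·n(n−1)/(2d) < 1, the instance I with p_t = ε for all t ∈ [n] and the prediction Î with p̂_t = 0 for t ∈ [n−1] and p̂_n = ε satisfy opt(I) = 1 + εn(n−1)/(2d) and opt(Î) = 1; hence opt(I) − opt(Î) = (n/(2d))·∑_{t∈[n]} |p_t − p̂_t| > 0. Consequently, the ℓ1-norm error measure err(I,Î) = ∑_{t}|p_t − p̂_t| violates Lipschitzness: there is no constant c independent of n such that |opt(I) − opt(Î)| ≤ c·err(I,Î) for all instances and predictions. -/

import Mathlib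

open Finset

/-- Waiting time from `t` until the first acknowledgment in `X` at or after `t` (`0` if none). -/
noncomputable def ackWait (X : Finset ℕ) (t : ℕ) : ℕ :=
  if h : (X.filter fun x => t ≤ x).Nonempty then (X.filter fun x => t ≤ x).min' h - t else 0

/-- Delay cost `D(I,X)` of solution `X` for the instance `p` on horizon `{a, …, b}`
with delay parameter `d`. -/
noncomputable def delayCost (d : ℝ) (a b : ℕ) (p : ℕ → ℝ) (X : Finset ℕ) : ℝ :=
  (1 / d) * ∑ t ∈ Finset.Icc a b, p t * (ackWait X t : ℝ)

/-- Total cost `F(I,X) = |X| + D(I,X)`. -/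
noncomputable def cost (d : ℝ) (a b : ℕ) (p : ℕ → ℝ) (X : Finset ℕ) : ℝ :=
  (X.card : ℝ) + delayCost d a b p X

/-- Feasibility of `X` for the instance `p` on horizon `{a,…,b}`: `X` is a nonempty subset of
the horizon and every time with positive demand has an acknowledgment at or after it. -/
def Feasible (a b : ℕ) (p : ℕ → ℝ) (X : Finset ℕ) : Prop :=
  X.Nonempty ∧ X ⊆ Finset.Icc a b ∧ ∀ t ∈ Finset.Icc a b, 0 < p t → ∃ x ∈ X, t ≤ x

/-- Optimal cost `opt(I)` of the instance `p` on horizon `{a,…,b}`. -/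
noncomputable def opt (d : ℝ) (a b : ℕ) (p : ℕ → ℝ) : ℝ :=
  sInf {c : ℝ | ∃ X : Finset ℕ, Feasible a b p X ∧ cost d a b p X = c}

/-- `Δ(I,Y,t) = D(I,Y) − D(I,Y ∪ {t})`. -/
noncomputable def delta (d : ℝ) (a b : ℕ) (p : ℕ → ℝ) (Y : Finset ℕ) (t : ℕ) : ℝ :=
  delayCost d a b p Y - delayCost d a b p (insert t Y)

/-- Auxiliary error `τ([t1,t2], I, Î) = opt(O(I⟨t1,t2⟩,Î⟨t1,t2⟩)) − opt(U(I⟨t1,t2⟩,Î⟨t1,t2⟩))`. -/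
noncomputable def auxErr (d : ℝ) (t1 t2 : ℕ) (p q : ℕ → ℝ) : ℝ :=
  opt d t1 t2 (fun t => max (p t) (q t)) - opt d t1 t2 (fun t => min (p t) (q t))

lemma ackWait_self {X : Finset ℕ} {t : ℕ} (ht : t ∈ X) : ackWait X t = 0 := by
  unfold ackWait
  have hm : t ∈ X.filter fun x => t ≤ x := Finset.mem_filter.mpr ⟨ht, le_refl t⟩
  have hne : (X.filter fun x => t ≤ x).Nonempty := ⟨t, hm⟩
  rw [dif_pos hne]
  have h1 : (X.filter fun x => t ≤ x).min' hne ≤ t := Finset.min'_le _ _ hm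
  omega

lemma ackWait_singleton {n t : ℕ} (h : t ≤ n) : ackWait {n} t = n - t := by
  unfold ackWait
  rw [Finset.filter_singleton]
  simp [h]

lemma delayCost_nonneg {d : ℝ} (hd : 0 < d) (a b : ℕ) {p : ℕ → ℝ} (hp : ∀ t, 0 ≤ p t)
    (X : Finset ℕ) : 0 ≤ delayCost d a b p X := by
  unfold delayCost
  apply mul_nonneg (by positivity)
  exact Finset.sum_nonneg fun t _ => mul_nonneg (hp t) (Nat.cast_nonneg _)

lemma sum_Icc_id' (n : ℕ) : 2 * ∑ t ∈ Finset.Icc 1 n, t = n * (n + 1) := by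
  induction n with
  | zero => simp
  | succ k ih =>
    rw [Finset.sum_Icc_succ_top (by omega), Nat.mul_add, ih]
    ring

lemma sum_wait (n : ℕ) : ∑ t ∈ Finset.Icc 1 n, ((n - t : ℕ) : ℝ) = n * ((n : ℝ) - 1) / 2 := by
  have h1 : ∀ t ∈ Finset.Icc 1 n, ((n - t : ℕ) : ℝ) = (n : ℝ) - (t : ℝ) := by
    intro t ht; exact_mod_cast Nat.cast_sub (Finset.mem_Icc.mp ht).2
  rw [Finset.sum_congr rfl h1, Finset.sum_sub_distrib, Finset.sum_const, Nat.card_Icc]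
  have h2 : ∑ t ∈ Finset.Icc 1 n, (t : ℝ) = n * ((n : ℝ) + 1) / 2 := by
    have h3 : ((2 * ∑ t ∈ Finset.Icc 1 n, t : ℕ) : ℝ) = ((n * (n + 1) : ℕ) : ℝ) := by
      rw [sum_Icc_id' n]
    push_cast at h3
    linarith
  rw [h2]
  simp only [Nat.add_sub_cancel, nsmul_eq_mul]
  ring

/-- The main computation: for the all-`ε` instance and the prediction concentrated at `n`,
the optimal costs are as claimed. -/
lemma opt_pair (n : ℕ) (hn : 2 ≤ n) (d ε : ℝ) (hd : 0 < d) (hε : 0 < ε)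
    (hsmall : ε * n * (n - 1) / (2 * d) < 1) :
    opt d 1 n (fun _ => ε) = 1 + ε * n * (n - 1) / (2 * d)
      ∧ opt d 1 n (fun t => if t = n then ε else 0) = 1 := by
  have hn1 : (1 : ℕ) ≤ n := by omega
  have hnmem : n ∈ Finset.Icc 1 n := Finset.mem_Icc.mpr ⟨hn1, le_refl n⟩
  constructor
  · -- opt for the constant instance
    have hfeas : Feasible 1 n (fun _ => ε) {n} := by
      refine ⟨⟨n, Finset.mem_singleton_self n⟩, ?_, ?_⟩
      · intro x hx; rw [Finset.mem_singleton] at hx; subst hx; exact hnmem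
      · intro t ht _; exact ⟨n, Finset.mem_singleton_self n, (Finset.mem_Icc.mp ht).2⟩
    have hcost : cost d 1 n (fun _ => ε) {n} = 1 + ε * n * (n - 1) / (2 * d) := by
      unfold cost delayCost
      have hc : ∀ t ∈ Finset.Icc 1 n,
          ε * ((ackWait {n} t : ℕ) : ℝ) = ε * ((n - t : ℕ) : ℝ) := by
        intro t ht; rw [ackWait_singleton (Finset.mem_Icc.mp ht).2]
      rw [Finset.sum_congr rfl hc, ← Finset.mul_sum, sum_wait]
      rw [Finset.card_singleton]
      push_cast
      field_simp
    have hlb : ∀ X, Feasible 1 n (fun _ => ε) X →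
        1 + ε * n * (n - 1) / (2 * d) ≤ cost d 1 n (fun _ => ε) X := by
      rintro X ⟨hne, hsub, hcover⟩
      have hdel := delayCost_nonneg hd 1 n (fun _ => le_of_lt hε) X
      by_cases hcard : 2 ≤ X.card
      · have h2 : (2 : ℝ) ≤ (X.card : ℝ) := by exact_mod_cast hcard
        unfold cost; linarith
      · have hc1 : X.card = 1 := by
          have := Finset.card_pos.mpr hne; omega
        obtain ⟨x, hx⟩ := Finset.card_eq_one.mp hc1
        obtain ⟨y, hy, hny⟩ := hcover n hnmem hε
        have hyx : y = x := by rw [hx] at hy; exact Finset.mem_singleton.mp hy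
        have hxn : x ≤ n := by
          have : x ∈ Finset.Icc 1 n := hsub (by rw [hx]; exact Finset.mem_singleton_self x)
          exact (Finset.mem_Icc.mp this).2
        have hxe : x = n := by omega
        rw [hx, hxe, hcost]
    have hBdd : (1 + ε * ↑n * (↑n - 1) / (2 * d)) ∈
        lowerBounds {c : ℝ | ∃ X, Feasible 1 n (fun _ => ε) X ∧ cost d 1 n (fun _ => ε) X = c} := by
      rintro c ⟨X, hX, rfl⟩; exact hlb X hX
    exact le_antisymm (csInf_le ⟨_, hBdd⟩ ⟨{n}, hfeas, hcost⟩)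
      (le_csInf ⟨_, {n}, hfeas, hcost⟩ hBdd)
  · -- opt for the prediction
    set q : ℕ → ℝ := fun t => if t = n then ε else 0 with hq
    have hq0 : ∀ t, 0 ≤ q t := by
      intro t; rw [hq]; dsimp only; split <;> [exact le_of_lt hε; exact le_refl 0]
    have hfeas : Feasible 1 n q {n} := by
      refine ⟨⟨n, Finset.mem_singleton_self n⟩, ?_, ?_⟩
      · intro x hx; rw [Finset.mem_singleton] at hx; subst hx; exact hnmem
      · intro t ht _; exact ⟨n, Finset.mem_singleton_self n, (Finset.mem_Icc.mp ht).2⟩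
    have hcost : cost d 1 n q {n} = 1 := by
      unfold cost delayCost
      have hzero : ∀ t ∈ Finset.Icc 1 n, q t * ((ackWait {n} t : ℕ) : ℝ) = 0 := by
        intro t ht
        by_cases h : t = n
        · subst h
          rw [ackWait_self (Finset.mem_singleton_self t)]
          simp
        · rw [hq]; simp [h]
      rw [Finset.sum_eq_zero hzero]
      simp
    have hlb : ∀ X, Feasible 1 n q X → 1 ≤ cost d 1 n q X := by
      rintro X ⟨hne, _, _⟩
      have hdel := delayCost_nonneg hd 1 n hq0 X
      have hc : (1 : ℝ) ≤ (X.card : ℝ) := by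
        exact_mod_cast Finset.card_pos.mpr hne
      unfold cost; linarith
    have hBdd : (1 : ℝ) ∈
        lowerBounds {c : ℝ | ∃ X, Feasible 1 n q X ∧ cost d 1 n q X = c} := by
      rintro c ⟨X, hX, rfl⟩; exact hlb X hX
    exact le_antisymm (csInf_le ⟨_, hBdd⟩ ⟨{n}, hfeas, hcost⟩)
      (le_csInf ⟨_, {n}, hfeas, hcost⟩ hBdd)

lemma l1_sum (n : ℕ) (hn : 2 ≤ n) (ε : ℝ) (hε : 0 < ε) :
    ∑ t ∈ Finset.Icc 1 n, |ε - (if t = n then ε else 0)| = ((n : ℝ) - 1) * ε := by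
  have h1 : ∀ t ∈ Finset.Icc 1 n,
      |ε - (if t = n then ε else 0)| = ε - (if t = n then ε else 0) := by
    intro t ht
    by_cases h : t = n <;> simp [h, abs_of_nonneg, le_of_lt hε, abs_of_pos hε]
  have hnmem : n ∈ Finset.Icc 1 n := Finset.mem_Icc.mpr ⟨by omega, le_refl n⟩
  rw [Finset.sum_congr rfl h1, Finset.sum_sub_distrib, Finset.sum_const, Nat.card_Icc,
    Finset.sum_ite_eq' (Finset.Icc 1 n) n (fun _ => ε), if_pos hnmem]
  simp only [Nat.add_sub_cancel, nsmul_eq_mul]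
  ring

/-- for `n ≥ 2`, `d > 0`, `ε > 0` with `ε·n(n−1)/(2d) < 1`, the instance
`p_t = ε` on `[n]` and prediction `p̂_t = 0` for `t < n`, `p̂_n = ε` satisfy
`opt(I) = 1 + εn(n−1)/(2d)`, `opt(Î) = 1`, hence the gap equals `(n/(2d))·ℓ1(I,Î) > 0`;
consequently, the `ℓ1`-norm error measure violates Lipschitzness: no constant `c` independent
of the horizon length satisfies `|opt(I) − opt(Î)| ≤ c·∑_t |p_t − p̂_t|` for all instances and
predictions. -/
theorem l1_error_violates_lipschitz (n : ℕ) (hn : 2 ≤ n) (d ε : ℝ) (hd : 0 < d) (hε : 0 < ε)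
    (hsmall : ε * n * (n - 1) / (2 * d) < 1) :
    (opt d 1 n (fun _ => ε) = 1 + ε * n * (n - 1) / (2 * d)
      ∧ opt d 1 n (fun t => if t = n then ε else 0) = 1
      ∧ opt d 1 n (fun _ => ε) - opt d 1 n (fun t => if t = n then ε else 0)
          = ((n : ℝ) / (2 * d)) * ∑ t ∈ Finset.Icc 1 n, |ε - (if t = n then ε else 0)|
      ∧ 0 < opt d 1 n (fun _ => ε) - opt d 1 n (fun t => if t = n then ε else 0))
    ∧ ¬ ∃ c : ℝ, ∀ (m : ℕ) (p q : ℕ → ℝ), (∀ t, 0 ≤ p t) → (∀ t, 0 ≤ q t) →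
        |opt d 1 m p - opt d 1 m q| ≤ c * ∑ t ∈ Finset.Icc 1 m, |p t - q t| := by
  have hn2 : (2 : ℝ) ≤ (n : ℝ) := by exact_mod_cast hn
  obtain ⟨h1, h2⟩ := opt_pair n hn d ε hd hε hsmall
  have hpos : 0 < ε * n * ((n : ℝ) - 1) / (2 * d) := by
    apply div_pos
    · exact mul_pos (mul_pos hε (by linarith)) (by linarith)
    · linarith
  refine ⟨⟨h1, h2, ?_, ?_⟩, ?_⟩
  · rw [h1, h2, l1_sum n hn ε hε]; ring
  · rw [h1, h2]; linarith
  · rintro ⟨c, hc⟩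
    set m : ℕ := max 2 (⌈2 * d * c⌉₊ + 1) with hm
    have hm2 : 2 ≤ m := le_max_left _ _
    have hmR : (2 : ℝ) ≤ (m : ℝ) := by exact_mod_cast hm2
    have hmc : 2 * d * c < (m : ℝ) := by
      have : (⌈2 * d * c⌉₊ + 1 : ℕ) ≤ m := le_max_right _ _
      have h' : ((⌈2 * d * c⌉₊ + 1 : ℕ) : ℝ) ≤ (m : ℝ) := by exact_mod_cast this
      have := Nat.le_ceil (2 * d * c)
      push_cast at h'
      linarith
    set ε' : ℝ := d / ((m : ℝ) * m) with hε'
    have hε'pos : 0 < ε' := by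
      apply div_pos hd; nlinarith
    have hkey : ε' * (m : ℝ) * (m : ℝ) = d := by
      rw [hε']; field_simp
    have hsm : ε' * m * ((m : ℝ) - 1) / (2 * d) < 1 := by
      rw [div_lt_one (by linarith)]
      nlinarith [mul_pos hε'pos (show (0:ℝ) < m by linarith)]
    obtain ⟨g1, g2⟩ := opt_pair m hm2 d ε' hd hε'pos hsm
    have hE := hc m (fun _ => ε') (fun t => if t = m then ε' else 0)
      (fun _ => le_of_lt hε'pos)
      (fun t => by split <;> [exact le_of_lt hε'pos; exact le_refl 0])
    rw [g1, g2, l1_sum m hm2 ε' hε'pos] at hE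
    have hA : 0 < ε' * m * ((m : ℝ) - 1) / (2 * d) := by
      apply div_pos
      · exact mul_pos (mul_pos hε'pos (by linarith)) (by linarith)
      · linarith
    rw [show (1 + ε' * m * ((m:ℝ) - 1) / (2 * d) - 1) = ε' * m * ((m:ℝ) - 1) / (2 * d) by ring,
      abs_of_pos hA, div_le_iff₀ (by linarith)] at hE
    have hprod : 0 < ε' * ((m : ℝ) - 1) * ((m : ℝ) - 2 * d * c) := by
      apply mul_pos (mul_pos hε'pos (by linarith)); linarith
    nlinarith [hE, hprod]
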